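/- For a subset Y of X and a natural number n, Y is n-thin if and only if |Δ_p(Y)| ≤ n for every p ∈ X^#. -/

import Mathlib

open Metric Bornology Set

variable {X : Type*} [MetricSpace X]

/-- `B(A,r) = ⋃_{a∈A} B(a,r)` where `B(a,r)` is the closed ball of radius `r`. -/
def ballU (A : Set X) (r : ℝ) : Set X := ⋃ a ∈ A, Metric.closedBall a r

/-- `X^#`: the set of ultrafilters on `X` all of whose members are unbounded. -/
def sharp (X : Type*) [MetricSpace X] : Set (Ultrafilter X) :=
  {p | ∀ P ∈ p, ¬ Bornology.IsBounded P}

/-- Parallelity: `p ∥ q` iff there is `r ≥ 0` with `B(Q,r) ∈ p` for every `Q ∈ q`. -/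
def Par (p q : Ultrafilter X) : Prop :=
  ∃ r : ℝ, 0 ≤ r ∧ ∀ Q ∈ q, ballU Q r ∈ p

/-- `p̆ = {q ∈ X^# : q ∥ p}`. -/
def pbreve (p : Ultrafilter X) : Set (Ultrafilter X) :=
  {q | q ∈ sharp X ∧ Par q p}

/-- The `p`-companion `Δ_p(Y) = {q ∈ X^# : Y ∈ q, q ∥ p}`. -/
def Delta (p : Ultrafilter X) (Y : Set X) : Set (Ultrafilter X) :=
  {q | q ∈ sharp X ∧ Y ∈ q ∧ Par q p}

/-- A set `S ⊆ X^#` is invariant if `p ∈ S`, `q ∈ X^#`, `q ∥ p` imply `q ∈ S`. -/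
def Invt (S : Set (Ultrafilter X)) : Prop :=
  ∀ p ∈ S, ∀ q, q ∈ sharp X → Par q p → q ∈ S

/-- `Y` is large if `X = B(Y,r)` for some `r ≥ 0`. -/
def Large (Y : Set X) : Prop := ∃ r : ℝ, 0 ≤ r ∧ ballU Y r = Set.univ

/-- `Y` is thick if for every `r ≥ 0` there is `y ∈ Y` with `B(y,r) ⊆ Y`. -/
def Thick (Y : Set X) : Prop := ∀ r : ℝ, 0 ≤ r → ∃ y ∈ Y, Metric.closedBall y r ⊆ Y

/-- `Y` is prethick if `B(Y,r)` is thick for some `r ≥ 0`. -/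
def Prethick (Y : Set X) : Prop := ∃ r : ℝ, 0 ≤ r ∧ Thick (ballU Y r)

/-- `Y` is small if `(X∖Y) ∩ L` is large for every large `L`. -/
def SmallSet (Y : Set X) : Prop := ∀ L : Set X, Large L → Large (Yᶜ ∩ L)

/-- `Y` is thin if for each `r ≥ 0` there is a bounded `V` with
`B(y,r) ∩ Y = {y}` for all `y ∈ Y∖V`. -/
def Thin (Y : Set X) : Prop :=
  ∀ r : ℝ, 0 ≤ r → ∃ V : Set X, Bornology.IsBounded V ∧
    ∀ y ∈ Y \ V, Metric.closedBall y r ∩ Y = {y}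

/-- `Y` is `n`-thin if for each `r ≥ 0` there is a bounded `V` with
`|B(y,r) ∩ Y| ≤ n` for all `y ∈ Y∖V`. -/
def NThin (n : ℕ) (Y : Set X) : Prop :=
  ∀ r : ℝ, 0 ≤ r → ∃ V : Set X, Bornology.IsBounded V ∧
    ∀ y ∈ Y \ V, (Metric.closedBall y r ∩ Y).encard ≤ n

/-- `M` is a minimal nonempty closed invariant subset of `X^#`
(closures/closedness taken in the Stone topology on ultrafilters). -/
def MinCI (M : Set (Ultrafilter X)) : Prop :=
  M ⊆ sharp X ∧ M.Nonempty ∧ IsClosed M ∧ Invt M ∧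
    ∀ S ⊆ M, S.Nonempty → IsClosed S → Invt S → S = M


section Helpers

lemma mem_ballU {A : Set X} {r : ℝ} {x : X} : x ∈ ballU A r ↔ ∃ a ∈ A, dist x a ≤ r := by
  simp [ballU]

lemma ballU_mono {A : Set X} {r s : ℝ} (h : r ≤ s) : ballU A r ⊆ ballU A s := by
  intro x hx
  rw [mem_ballU] at hx ⊢
  obtain ⟨a, ha, hd⟩ := hx
  exact ⟨a, ha, hd.trans h⟩

lemma isBounded_ballU {A : Set X} (hA : IsBounded A) (r : ℝ) : IsBounded (ballU A r) := by
  rcases A.eq_empty_or_nonempty with h | ⟨c, hc⟩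
  · simp [ballU, h]
  obtain ⟨t, ht⟩ := (Metric.isBounded_iff_subset_closedBall c).mp hA
  apply (Metric.isBounded_closedBall (x := c) (r := t + r)).subset
  intro x hx
  rw [mem_ballU] at hx
  obtain ⟨a, ha, hd⟩ := hx
  have := ht ha
  rw [Metric.mem_closedBall] at this ⊢
  calc dist x c ≤ dist x a + dist a c := dist_triangle _ _ _
    _ ≤ r + t := add_le_add hd this
    _ = t + r := by ring

lemma encard_range_fin {α : Type*} {m : ℕ} (f : Fin m → α) (hf : Function.Injective f) :
    (Set.range f).encard = m := by
  rw [← Set.image_univ, hf.encard_image _, Set.encard_univ]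
  simp

lemma exists_fin_inj_of_encard {α : Type*} {s : Set α} {n : ℕ} (h : ¬ s.encard ≤ n) :
    ∃ f : Fin (n+1) → α, Function.Injective f ∧ ∀ i, f i ∈ s := by
  have h1 : ((n+1 : ℕ) : ℕ∞) ≤ s.encard := by
    rw [not_le] at h
    exact_mod_cast Order.add_one_le_of_lt h
  obtain ⟨t, hts, ht⟩ := Set.exists_subset_encard_eq h1
  have hfin : t.Finite := Set.finite_of_encard_eq_coe ht
  have hcard : hfin.toFinset.card = n + 1 := by
    have := hfin.encard_eq_coe_toFinset_card
    rw [ht] at this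
    exact_mod_cast this.symm
  let e := hfin.toFinset.equivFin
  refine ⟨fun i => (e.symm (Fin.cast hcard.symm i)).1, ?_, ?_⟩
  · intro i j hij
    have h2 : Fin.cast hcard.symm i = Fin.cast hcard.symm j := e.symm.injective (Subtype.ext hij)
    simpa [Fin.ext_iff] using h2
  · intro i
    exact hts (hfin.mem_toFinset.mp (e.symm (Fin.cast hcard.symm i)).2)

lemma compl_mem_of_sharp {p : Ultrafilter X} (hp : p ∈ sharp X) {V : Set X}
    (hV : IsBounded V) : Vᶜ ∈ p := by
  rw [Ultrafilter.compl_mem_iff_notMem]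
  exact fun h => hp V h hV

lemma par_flip {p q : Ultrafilter X} {r : ℝ} (h : ∀ P ∈ p, ballU P r ∈ q)
    {Q : Set X} (hQ : Q ∈ q) : ballU Q r ∈ p := by
  by_contra hc
  rw [← Ultrafilter.compl_mem_iff_notMem] at hc
  have h2 : ballU (ballU Q r)ᶜ r ∈ q := h _ hc
  have h3 : ballU (ballU Q r)ᶜ r ∩ Q ∈ q := Filter.inter_mem h2 hQ
  have : ballU (ballU Q r)ᶜ r ∩ Q = ∅ := by
    ext x
    simp only [Set.mem_inter_iff, Set.mem_empty_iff_false, iff_false, not_and]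
    intro hx hxQ
    rw [mem_ballU] at hx
    obtain ⟨a, ha, hd⟩ := hx
    exact ha (mem_ballU.mpr ⟨x, hxQ, by rwa [dist_comm]⟩)
  rw [this] at h3
  simpa using h3

lemma exists_mem_compl_mem {q₁ q₂ : Ultrafilter X} (h : q₁ ≠ q₂) :
    ∃ s : Set X, s ∈ q₁ ∧ sᶜ ∈ q₂ := by
  by_contra hc
  push_neg at hc
  apply h
  have hle : (q₂ : Filter X) ≤ (q₁ : Filter X) := by
    intro s hs
    have := hc s hs
    rwa [Ultrafilter.compl_mem_iff_notMem, not_not] at this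
  exact (Ultrafilter.coe_le_coe.mp hle).symm

lemma exists_disjoint_mem {m : ℕ} (q : Fin m → Ultrafilter X) (hq : Function.Injective q)
    (Y : Set X) (hY : ∀ i, Y ∈ q i) :
    ∃ Z : Fin m → Set X, (∀ i, Z i ∈ q i) ∧ (∀ i, Z i ⊆ Y) ∧
      ∀ i j, i ≠ j → Z i ∩ Z j = ∅ := by
  have hA : ∀ i j : Fin m, i ≠ j → ∃ s : Set X, s ∈ q i ∧ sᶜ ∈ q j := by
    intro i j hij
    exact exists_mem_compl_mem (fun h => hij (hq h))
  classical
  choose A hA1 hA2 using fun i j => fun (h : i ≠ j) => hA i j h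
  refine ⟨fun i => Y ∩ ⋂ j, (if h : j = i then Set.univ else A i j (fun hh => h (hh.symm)) ∩ (A j i h)ᶜ),
    ?_, fun i => Set.inter_subset_left, ?_⟩
  · intro i
    refine Filter.inter_mem (hY i) (Filter.iInter_mem.mpr fun j => ?_)
    by_cases h : j = i
    · simp [h]
    · simp only [dif_neg h]
      exact Filter.inter_mem (hA1 i j _) (hA2 j i h)
  · intro i j hij
    rw [Set.eq_empty_iff_forall_notMem]
    rintro x ⟨hxi, hxj⟩
    have h1 := Set.mem_iInter.mp hxi.2 j
    have h2 := Set.mem_iInter.mp hxj.2 i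
    rw [dif_neg hij] at h2
    rw [dif_neg (Ne.symm hij)] at h1
    exact h2.2 h1.1

noncomputable def chainL (pick : Set X → X) (x0 : X) (r : ℝ) : ℕ → List X
  | 0 => []
  | k+1 => chainL pick x0 r k ++
      [pick (Metric.closedBall x0 (k + r) ∪
        ⋃ z ∈ {z | z ∈ chainL pick x0 r k}, Metric.closedBall z (2*r+1))]

noncomputable def chainV (pick : Set X → X) (x0 : X) (r : ℝ) (k : ℕ) : Set X :=
  Metric.closedBall x0 (k + r) ∪
    ⋃ z ∈ {z | z ∈ chainL pick x0 r k}, Metric.closedBall z (2*r+1)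

noncomputable def chainX (pick : Set X → X) (x0 : X) (r : ℝ) (k : ℕ) : X :=
  pick (chainV pick x0 r k)

lemma chainL_succ (pick : Set X → X) (x0 : X) (r : ℝ) (k : ℕ) :
    chainL pick x0 r (k+1) = chainL pick x0 r k ++ [chainX pick x0 r k] := rfl

lemma chainV_isBounded (pick : Set X → X) (x0 : X) (r : ℝ) (k : ℕ) :
    IsBounded (chainV pick x0 r k) := by
  refine IsBounded.union Metric.isBounded_closedBall ?_
  exact (Bornology.isBounded_biUnion (List.finite_toSet _)).mpr
    (fun z _ => Metric.isBounded_closedBall)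

lemma chainX_mem_chainL (pick : Set X → X) (x0 : X) (r : ℝ) {l k : ℕ} (h : l < k) :
    chainX pick x0 r l ∈ chainL pick x0 r k := by
  induction k with
  | zero => omega
  | succ k ih =>
    rw [chainL_succ]
    rcases Nat.lt_succ_iff_lt_or_eq.mp h with h' | h'
    · exact List.mem_append_left _ (ih h')
    · subst h'
      exact List.mem_append_right _ (List.mem_singleton_self _)

lemma sharp_of_far {g : ℕ → X} {x0 : X} (hg : ∀ k : ℕ, (k:ℝ) ≤ dist (g k) x0) :
    Ultrafilter.map g (Filter.hyperfilter ℕ) ∈ sharp X := by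
  intro P hP hb
  obtain ⟨c, hc⟩ := (Metric.isBounded_iff_subset_closedBall x0).mp hb
  have hpre : g ⁻¹' P ∈ Filter.hyperfilter ℕ := Ultrafilter.mem_map.mp hP
  have hinf : (g ⁻¹' P).Infinite := by
    by_contra hfin
    rw [Set.not_infinite] at hfin
    exact Filter.notMem_hyperfilter_of_finite hfin hpre
  obtain ⟨m, hm⟩ := exists_nat_gt c
  obtain ⟨k, hk, hmk⟩ := hinf.exists_gt m
  have h1 : dist (g k) x0 ≤ c := Metric.mem_closedBall.mp (hc hk)
  have h2 := hg k
  have : (m : ℝ) < (k : ℝ) := by exact_mod_cast hmk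
  linarith

lemma nthin_backward {Y : Set X} {n : ℕ} (hX : ¬ Bornology.IsBounded (Set.univ : Set X))
    (hbad : ∃ r : ℝ, 0 ≤ r ∧ ∀ V : Set X, IsBounded V →
      ∃ y ∈ Y \ V, ¬ (Metric.closedBall y r ∩ Y).encard ≤ (n:ℕ∞)) :
    ∃ p ∈ sharp X, ∃ q : Fin (n+1) → Ultrafilter X, Function.Injective q ∧
      ∀ i, q i ∈ sharp X ∧ Y ∈ q i ∧
        ∃ s : ℝ, 0 ≤ s ∧ ∀ P ∈ p, (⋃ a ∈ P, Metric.closedBall a s) ∈ q i := by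
  obtain ⟨r, hr0, hbad⟩ := hbad
  have hne : Nonempty X := by
    by_contra hne
    rw [not_nonempty_iff] at hne
    rw [Set.univ_eq_empty_iff.mpr hne] at hX
    exact hX Bornology.isBounded_empty
  have hpick : ∀ V : Set X, ∃ y : X, IsBounded V →
      (y ∈ Y \ V ∧ ¬ (Metric.closedBall y r ∩ Y).encard ≤ (n:ℕ∞)) := by
    intro V
    by_cases hV : IsBounded V
    · obtain ⟨y, hy1, hy2⟩ := hbad V hV
      exact ⟨y, fun _ => ⟨hy1, hy2⟩⟩
    · exact ⟨Classical.arbitrary X, fun hh => absurd hh hV⟩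
  choose pick hpickP using hpick
  set x0 : X := Classical.arbitrary X with hx0
  set xs : ℕ → X := chainX pick x0 r with hxsdef
  have hx : ∀ k, xs k ∈ Y \ chainV pick x0 r k ∧
      ¬ (Metric.closedBall (xs k) r ∩ Y).encard ≤ (n:ℕ∞) :=
    fun k => hpickP _ (chainV_isBounded pick x0 r k)
  have hfar : ∀ k : ℕ, (k : ℝ) + r < dist (xs k) x0 := by
    intro k
    have h1 := (hx k).1.2
    rw [chainV] at h1
    have h2 : xs k ∉ Metric.closedBall x0 (k + r) := fun hm => h1 (Set.mem_union_left _ hm)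
    rw [Metric.mem_closedBall, not_le] at h2
    exact h2
  have hsep : ∀ l k : ℕ, l < k → 2*r + 1 < dist (xs k) (xs l) := by
    intro l k hlk
    have h1 := (hx k).1.2
    rw [chainV] at h1
    have h2 : xs k ∉ Metric.closedBall (xs l) (2*r+1) := by
      intro hm
      apply h1
      apply Set.mem_union_right
      exact Set.mem_biUnion (chainX_mem_chainL pick x0 r hlk) hm
    rw [Metric.mem_closedBall, not_le] at h2
    exact h2
  have hdisj : ∀ k l : ℕ, k ≠ l →
      Metric.closedBall (xs k) r ∩ Metric.closedBall (xs l) r = ∅ := by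
    have key : ∀ l k : ℕ, l < k →
        Metric.closedBall (xs k) r ∩ Metric.closedBall (xs l) r = ∅ := by
      intro l k hlk
      rw [Set.eq_empty_iff_forall_notMem]
      rintro z ⟨hz1, hz2⟩
      rw [Metric.mem_closedBall] at hz1 hz2
      have h3 := hsep l k hlk
      have h4 := dist_triangle (xs k) z (xs l)
      rw [dist_comm (xs k) z] at h4
      linarith
    intro k l hkl
    rcases hkl.lt_or_gt with h | h
    · rw [Set.inter_comm]; exact key k l h
    · exact key l k h
  have hys := fun k => exists_fin_inj_of_encard (hx k).2
  choose ys hysinj hysmem using hys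
  have hysb : ∀ k i, dist (ys k i) (xs k) ≤ r :=
    fun k i => Metric.mem_closedBall.mp (hysmem k i).1
  have hysY : ∀ k i, ys k i ∈ Y := fun k i => (hysmem k i).2
  refine ⟨Ultrafilter.map xs (Filter.hyperfilter ℕ), ?_,
    fun i => Ultrafilter.map (fun k => ys k i) (Filter.hyperfilter ℕ), ?_, ?_⟩
  · exact sharp_of_far (fun k => le_of_lt (by have := hfar k; linarith))
  · intro i j hij
    simp only at hij
    by_contra hne'
    have hSi : Set.range (fun k => ys k i) ∈
        Ultrafilter.map (fun k => ys k i) (Filter.hyperfilter ℕ) :=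
      Ultrafilter.mem_map.mpr (Filter.univ_mem' fun k => ⟨k, rfl⟩)
    have hSj : Set.range (fun k => ys k j) ∈
        Ultrafilter.map (fun k => ys k j) (Filter.hyperfilter ℕ) :=
      Ultrafilter.mem_map.mpr (Filter.univ_mem' fun k => ⟨k, rfl⟩)
    rw [← hij] at hSj
    have hinter := Filter.inter_mem hSi hSj
    have hempty : Set.range (fun k => ys k i) ∩ Set.range (fun k => ys k j) = ∅ := by
      rw [Set.eq_empty_iff_forall_notMem]
      rintro x ⟨⟨k, hk⟩, ⟨l, hl⟩⟩
      simp only at hk hl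
      have hkl : k = l := by
        by_contra hkl
        have hzz : x ∈ Metric.closedBall (xs k) r ∩ Metric.closedBall (xs l) r := by
          constructor
          · rw [← hk]; exact (hysmem k i).1
          · rw [← hl]; exact (hysmem l j).1
        rw [hdisj k l hkl] at hzz
        exact hzz
      subst hkl
      exact hne' (hysinj k (hk.trans hl.symm))
    rw [hempty] at hinter
    simpa using hinter
  · intro i
    refine ⟨?_, ?_, r, hr0, ?_⟩
    · apply sharp_of_far (x0 := x0)
      intro k
      have h1 := hfar k
      have h2 := hysb k i
      have h3 := dist_triangle (xs k) (ys k i) x0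
      rw [dist_comm (xs k) (ys k i)] at h3
      linarith
    · exact Ultrafilter.mem_map.mpr (Filter.univ_mem' (fun k => hysY k i))
    · intro P hP
      rw [Ultrafilter.mem_map] at hP ⊢
      apply Filter.mem_of_superset hP
      intro k hk
      exact Set.mem_biUnion hk (Metric.mem_closedBall.mpr (hysb k i))

lemma nthin_forward {Y : Set X} {n : ℕ} (h : NThin n Y) :
    ∀ p ∈ sharp X, (Delta p Y).encard ≤ n := by
  intro p hp
  by_contra hc
  obtain ⟨q, hqinj, hqmem⟩ := exists_fin_inj_of_encard hc
  have hYq : ∀ i, Y ∈ q i := fun i => (hqmem i).2.1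
  have hpar : ∀ i, Par (q i) p := fun i => (hqmem i).2.2
  obtain ⟨Z, hZmem, hZY, hZdisj⟩ := exists_disjoint_mem q hqinj Y hYq
  choose rf hrf0 hrf using hpar
  set R : ℝ := ∑ i, rf i with hR
  have hR0 : 0 ≤ R := Finset.sum_nonneg fun i _ => hrf0 i
  have hle : ∀ i, rf i ≤ R := fun i =>
    Finset.single_le_sum (fun j _ => hrf0 j) (Finset.mem_univ i)
  have hbp : ∀ i, ballU (Z i) R ∈ p := by
    intro i
    have h1 : ballU (Z i) (rf i) ∈ p := par_flip (hrf i) (hZmem i)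
    exact Filter.mem_of_superset h1 (ballU_mono (hle i))
  obtain ⟨V, hVb, hV⟩ := h (2*R) (by linarith)
  have hV' : IsBounded (ballU V R) := isBounded_ballU hVb R
  have hPm : (⋂ i, ballU (Z i) R) ∩ (ballU V R)ᶜ ∈ p :=
    Filter.inter_mem (Filter.iInter_mem.mpr hbp) (compl_mem_of_sharp hp hV')
  obtain ⟨x, hx1, hx2⟩ := Filter.nonempty_of_mem hPm
  have hy : ∀ i, ∃ y, y ∈ Z i ∧ dist x y ≤ R := by
    intro i
    have h1 := Set.mem_iInter.mp hx1 i
    rw [mem_ballU] at h1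
    tauto
  choose yf hyZ hyd using hy
  have hyinj : Function.Injective yf := by
    intro i j hij
    by_contra hne
    have h1 : yf i ∈ Z i ∩ Z j := ⟨hyZ i, hij ▸ hyZ j⟩
    rw [hZdisj i j hne] at h1
    exact h1
  have hyY : ∀ i, yf i ∈ Y := fun i => hZY i (hyZ i)
  have hy0V : yf 0 ∉ V := fun hmem => hx2 (mem_ballU.mpr ⟨yf 0, hmem, hyd 0⟩)
  have hsub : Set.range yf ⊆ Metric.closedBall (yf 0) (2*R) ∩ Y := by
    rintro _ ⟨i, rfl⟩
    refine ⟨Metric.mem_closedBall.mpr ?_, hyY i⟩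
    calc dist (yf i) (yf 0) ≤ dist (yf i) x + dist x (yf 0) := dist_triangle _ _ _
      _ ≤ R + R := add_le_add (by rw [dist_comm]; exact hyd i) (hyd 0)
      _ = 2*R := by ring
  have hcard := hV (yf 0) ⟨hyY 0, hy0V⟩
  have hge : ((n+1 : ℕ) : ℕ∞) ≤ (Metric.closedBall (yf 0) (2*R) ∩ Y).encard := by
    rw [← encard_range_fin yf hyinj]
    exact Set.encard_mono hsub
  have : ((n+1 : ℕ) : ℕ∞) ≤ (n : ℕ∞) := hge.trans hcard
  rw [Nat.cast_le] at this
  omega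

end Helpers

theorem stmt15 (hX : ¬ Bornology.IsBounded (Set.univ : Set X)) (Y : Set X) (n : ℕ) :
    NThin n Y ↔ ∀ p ∈ sharp X, (Delta p Y).encard ≤ n := by
  constructor
  · exact fun h => nthin_forward h
  · intro h
    by_contra hc
    unfold NThin at hc
    push_neg at hc
    simp only [← not_le] at hc
    obtain ⟨p, hp, q, hqinj, hq⟩ := nthin_backward hX hc
    have hn := h p hp
    have hsub : Set.range q ⊆ Delta p Y := by
      rintro _ ⟨i, rfl⟩
      obtain ⟨h1, h2, s, hs0, hs⟩ := hq i
      exact ⟨h1, h2, s, hs0, fun P hP => hs P hP⟩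
    have hge : ((n+1:ℕ) : ℕ∞) ≤ (Delta p Y).encard := by
      rw [← encard_range_fin q hqinj]
      exact Set.encard_mono hsub
    have hfin := hge.trans hn
    rw [Nat.cast_le] at hfin
    omega
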